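/- Let X be a finite T0 topological space. Let G be the simple graph on X in which distinct points x and y are adjacent if and only if x ⋖ y or y ⋖ x, where ⋖ is the covering relation of the specialization order. Then X is a connected topological space if and only if G is a connected graph. -/

import Mathlib

/-- The specialisation order of a topological space: `x ⪯ y` iff `x ∈ closure {y}`. -/
def specLE {X : Type*} [TopologicalSpace X] (x y : X) : Prop := x ∈ closure ({y} : Set X)

/-- Strict specialisation: `x ≺ y`. -/
def specLT {X : Type*} [TopologicalSpace X] (x y : X) : Prop := specLE x y ∧ x ≠ y

/-- The covering relation of the specialisation order: `x ⋖ y`. -/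
def specCov {X : Type*} [TopologicalSpace X] (x y : X) : Prop :=
  specLT x y ∧ ¬ ∃ z, specLT x z ∧ specLT z y

/-- The underlying undirected graph of the Hasse diagram of the specialisation order:
distinct points `x` and `y` are adjacent iff `x ⋖ y` or `y ⋖ x`. -/
def hasseGraph (X : Type*) [TopologicalSpace X] : SimpleGraph X where
  Adj x y := specCov x y ∨ specCov y x
  symm := ⟨fun _ _ (h : _ ∨ _) => h.symm⟩
  loopless := ⟨fun _ (h : _ ∨ _) => h.elim (fun h' => h'.1.2 rfl) (fun h' => h'.1.2 rfl)⟩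

section Aux

variable {X : Type*} [TopologicalSpace X]

lemma specLE_trans {x y z : X} (h1 : specLE x y) (h2 : specLE y z) : specLE x z :=
  closure_minimal (Set.singleton_subset_iff.2 h2) isClosed_closure h1

lemma specLT_trans {x y z : X} [T0Space X] (h1 : specLT x y) (h2 : specLT y z) : specLT x z := by
  refine ⟨specLE_trans h1.1 h2.1, fun h => ?_⟩
  subst h
  exact h2.2 ((specializes_iff_mem_closure.2 h1.1).antisymm
    (specializes_iff_mem_closure.2 h2.1)).eq

/-- In a finite T0 space, strictly smaller points are reachable in the Hasse graph. -/
lemma reachable_of_specLT [Finite X] [T0Space X] :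
    ∀ n (a b : X), ({z | specLT a z ∧ specLT z b}).ncard ≤ n → specLT a b →
      (hasseGraph X).Reachable a b := by
  intro n
  induction n with
  | zero =>
    intro a b hcard hab
    refine SimpleGraph.Adj.reachable (Or.inl ⟨hab, ?_⟩)
    rintro ⟨z, hz⟩
    have hS : {z | specLT a z ∧ specLT z b} = ∅ :=
      (Set.ncard_eq_zero (Set.toFinite _)).1 (Nat.le_zero.1 hcard)
    have hz' : z ∈ {z | specLT a z ∧ specLT z b} := hz
    rw [hS] at hz'
    exact hz'
  | succ n ih =>
    intro a b hcard hab
    by_cases h : ∃ z, specLT a z ∧ specLT z b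
    · obtain ⟨z, h1, h2⟩ := h
      have hsub1 : {w | specLT a w ∧ specLT w z} ⊂ {w | specLT a w ∧ specLT w b} := by
        constructor
        · rintro w ⟨hw1, hw2⟩; exact ⟨hw1, specLT_trans hw2 h2⟩
        · intro hcon
          exact (hcon ⟨h1, h2⟩).2.2 rfl
      have hsub2 : {w | specLT z w ∧ specLT w b} ⊂ {w | specLT a w ∧ specLT w b} := by
        constructor
        · rintro w ⟨hw1, hw2⟩; exact ⟨specLT_trans h1 hw1, hw2⟩
        · intro hcon
          exact (hcon ⟨h1, h2⟩).1.2 rfl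
      have hc1 := Set.ncard_lt_ncard hsub1 (Set.toFinite _)
      have hc2 := Set.ncard_lt_ncard hsub2 (Set.toFinite _)
      exact (ih a z (by omega) h1).trans (ih z b (by omega) h2)
    · exact SimpleGraph.Adj.reachable (Or.inl ⟨hab, h⟩)

lemma reachable_of_specLT' [Finite X] [T0Space X] {a b : X} (h : specLT a b) :
    (hasseGraph X).Reachable a b :=
  reachable_of_specLT _ a b le_rfl h

end Aux

/-- A finite T0-space is connected iff the undirected Hasse diagram of its specialisation
order is a connected graph. -/
theorem stmt4 {X : Type*} [TopologicalSpace X] [Finite X] [T0Space X] :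
    ConnectedSpace X ↔ (hasseGraph X).Connected := by
  constructor
  · intro hX
    obtain ⟨x⟩ : Nonempty X := hX.toNonempty
    set C : Set X := {y | (hasseGraph X).Reachable x y} with hC
    -- key: for any set S closed under reachability into it, closure stays in it
    have key : ∀ (S : Set X), (∀ a b : X, a ∈ S → (hasseGraph X).Reachable a b → b ∈ S) →
        IsClosed S := by
      intro S hS
      have hsub : closure S ⊆ ⋃ y ∈ S, closure {y} := by
        refine closure_minimal (fun y hy => Set.mem_biUnion hy (subset_closure rfl)) ?_
        exact Set.Finite.isClosed_biUnion (Set.toFinite _) fun _ _ => isClosed_closure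
      rw [← closure_subset_iff_isClosed]
      intro a ha
      obtain ⟨y, hyS, hay⟩ := Set.mem_iUnion₂.1 (hsub ha)
      rcases eq_or_ne a y with rfl | hne
      · exact hyS
      · exact hS y a hyS (reachable_of_specLT' ⟨hay, hne⟩).symm
    have hclosed : IsClosed C := key C (fun a b ha hab => Set.mem_setOf.2 (ha.trans hab))
    have hopen : IsClosed Cᶜ := by
      refine key Cᶜ (fun a b ha hab hb => ha ?_)
      exact Set.mem_setOf.2 ((Set.mem_setOf.1 hb).trans hab.symm)
    have hclopen : IsClopen C := ⟨hclosed, isClosed_compl_iff.1 hopen⟩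
    have : C = Set.univ := by
      rcases isClopen_iff.1 hclopen with h | h
      · exact absurd h (by
          intro h
          exact (Set.eq_empty_iff_forall_notMem.1 h x) (SimpleGraph.Reachable.refl x))
      · exact h
    have hpre : (hasseGraph X).Preconnected := by
      intro y z
      have hy : y ∈ C := this ▸ Set.mem_univ y
      have hz : z ∈ C := this ▸ Set.mem_univ z
      exact (Set.mem_setOf.1 hy).symm.trans (Set.mem_setOf.1 hz)
    exact (SimpleGraph.connected_iff _).2 ⟨hpre, ⟨x⟩⟩
  · intro hG
    obtain ⟨v⟩ := hG.nonempty
    have hadj : ∀ a b : X, (hasseGraph X).Adj a b →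
        connectedComponent a = connectedComponent b := by
      intro a b hab
      have : ∀ c d : X, specCov c d → connectedComponent c = connectedComponent d := by
        intro c d hcd
        have hconn : IsConnected (closure ({d} : Set X)) := isConnected_singleton.closure
        have hsubc : closure ({d} : Set X) ⊆ connectedComponent d :=
          hconn.isPreconnected.subset_connectedComponent (subset_closure rfl)
        exact (connectedComponent_eq (hsubc hcd.1.1)).symm
      rcases hab with h | h
      · exact this a b h
      · exact (this b a h).symm
    have hall : ∀ y : X, connectedComponent v = connectedComponent y := by
      intro y
      obtain ⟨w⟩ := hG.preconnected v y
      induction w with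
      | nil => rfl
      | cons h _ ih => exact (hadj _ _ h).trans ih
    have huniv : connectedComponent v = Set.univ := by
      ext y
      simp only [Set.mem_univ, iff_true]
      exact (hall y) ▸ mem_connectedComponent
    have hpc : IsPreconnected (Set.univ : Set X) :=
      huniv ▸ (isConnected_connectedComponent (x := v)).isPreconnected
    haveI : PreconnectedSpace X := ⟨hpc⟩
    exact ⟨⟨v⟩⟩
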